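/- arXiv:2106.07170 — 13 statements merged into one kernel-verified Lean document; each statement's English description precedes it below -/
import Mathlib

section
/- Let X be a quasi-compact topological space and Φ a finitary system of supports in X (i.e., every member of Φ is contained in a member Z of Φ such that X∖Z is retrocompact in X). If (Z_δ)_{δ∈D} is a family of closed subsets of X such that the intersection ⋂_{δ∈D} Z_δ belongs to Φ, then there is a finite subset D₀ ⊆ D such that ⋂_{δ∈D₀} Z_δ belongs to Φ. -/
/-- A system of supports in a topological space `X`: a nonempty set `Φ` of closed subsets
of `X` such that any closed subset of any finite union of members of `Φ` belongs to `Φ`. -/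
def IsSOS {X : Type*} [TopologicalSpace X] (Φ : Set (Set X)) : Prop :=
  Φ.Nonempty ∧ (∀ Z ∈ Φ, IsClosed Z) ∧
    ∀ s : Finset (Set X), ↑s ⊆ Φ → ∀ C : Set X, IsClosed C → C ⊆ ⋃ Z ∈ s, Z → C ∈ Φ

/-- `Φ` is finitary: every member of `Φ` is contained in a member `Z` such that
`X ∖ Z` is retrocompact in `X`. -/
def FinitarySOS {X : Type*} [TopologicalSpace X] (Φ : Set (Set X)) : Prop :=
  ∀ W ∈ Φ, ∃ Z ∈ Φ, W ⊆ Z ∧ ∀ U : Set X, IsOpen U → IsCompact U → IsCompact (U \ Z)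

theorem stmt0 {X : Type*} [TopologicalSpace X] [CompactSpace X]
    (Φ : Set (Set X)) (hΦ : IsSOS Φ) (hfin : FinitarySOS Φ)
    {D : Type*} (Z : D → Set X) (hZ : ∀ d, IsClosed (Z d))
    (h : (⋂ d, Z d) ∈ Φ) :
    ∃ D₀ : Finset D, (⋂ d ∈ D₀, Z d) ∈ Φ := by
  obtain ⟨Z', hZ'Φ, hsub, hretro⟩ := hfin _ h
  have hcpt : IsCompact ((Set.univ : Set X) \ Z') :=
    hretro Set.univ isOpen_univ isCompact_univ
  -- the open sets (Z d)ᶜ cover univ \ Z'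
  have hcover : (Set.univ : Set X) \ Z' ⊆ ⋃ d, (Z d)ᶜ := by
    intro x hx
    by_contra hc
    simp only [Set.mem_iUnion, Set.mem_compl_iff, not_exists, not_not] at hc
    exact hx.2 (hsub (Set.mem_iInter.2 hc))
  obtain ⟨D₀, hD₀⟩ := hcpt.elim_finite_subcover (fun d => (Z d)ᶜ)
    (fun d => (hZ d).isOpen_compl) hcover
  refine ⟨D₀, ?_⟩
  have hsub' : (⋂ d ∈ D₀, Z d) ⊆ Z' := by
    intro x hx
    by_contra hc
    obtain ⟨d, hd, hxd⟩ := by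
      simpa only [Set.mem_iUnion, Set.mem_compl_iff] using hD₀ ⟨trivial, hc⟩
    exact hxd (Set.mem_iInter₂.1 hx d hd)
  have := hΦ.2.2 {Z'} (by simpa using hZ'Φ) (⋂ d ∈ D₀, Z d)
    (isClosed_biInter fun d _ => hZ d)
  apply this
  simpa using hsub'
end

section
/- Let X be a noetherian topological space in which every irreducible closed subset is the closure of one of its points. Then every system of supports in X equals Φ_Y for a unique specialization-stable subset Y ⊆ X, where Φ_Y consists of all subsets of Y closed in X. -/
/-- `Y` is specialization-stable: it contains the closure of each of its points. -/
def SpecStable {X : Type*} [TopologicalSpace X] (Y : Set X) : Prop :=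
  ∀ y ∈ Y, closure {y} ⊆ Y

theorem stmt2 {X : Type*} [TopologicalSpace X] [TopologicalSpace.NoetherianSpace X]
    (hsober : ∀ T : Set X, IsClosed T → IsIrreducible T → ∃ x ∈ T, closure {x} = T)
    (Φ : Set (Set X)) (hΦ : IsSOS Φ) :
    ∃! Y : Set X, SpecStable Y ∧ Φ = {Z : Set X | IsClosed Z ∧ Z ⊆ Y} := by
  classical
  obtain ⟨hne, hcl, hfin⟩ := hΦ
  set Y : Set X := ⋃ Z ∈ Φ, Z with hY
  -- key: every closed subset of Y is in Φ
  have key : ∀ Z : TopologicalSpace.Closeds X, (Z : Set X) ⊆ Y → (Z : Set X) ∈ Φ := by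
    intro Z
    induction Z using WellFoundedLT.induction with
    | _ Z IH =>
      intro hZY
      rcases eq_or_ne (Z : Set X) ∅ with h0 | h0
      · exact hfin ∅ (by simp) (Z : Set X) Z.2 (by simp [h0])
      by_cases hirr : IsIrreducible (Z : Set X)
      · obtain ⟨x, hxZ, hx⟩ := hsober Z Z.2 hirr
        obtain ⟨W, hWΦ, hxW⟩ := Set.mem_iUnion₂.mp (hZY hxZ)
        have hZW : (Z : Set X) ⊆ W := by
          rw [← hx]
          exact closure_minimal (Set.singleton_subset_iff.mpr hxW) (hcl W hWΦ)
        exact hfin {W} (by simpa using hWΦ) Z Z.2 (by simpa using hZW)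
      · -- reducible: split into two proper closed subsets
        have hnon : (Z : Set X).Nonempty := Set.nonempty_iff_ne_empty.mpr h0
        have hpre : ¬ IsPreirreducible (Z : Set X) := fun h => hirr ⟨hnon, h⟩
        rw [isPreirreducible_iff_isClosed_union_isClosed] at hpre
        push_neg at hpre
        obtain ⟨z₁, z₂, hc₁, hc₂, hsub, hn₁, hn₂⟩ := hpre
        set A : TopologicalSpace.Closeds X := ⟨(Z : Set X) ∩ z₁, Z.2.inter hc₁⟩
        set B : TopologicalSpace.Closeds X := ⟨(Z : Set X) ∩ z₂, Z.2.inter hc₂⟩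
        have hA : A < Z := by
          refine lt_of_le_of_ne (fun x hx => hx.1) ?_
          intro h
          exact hn₁ fun x hx => (h ▸ hx : x ∈ (A : Set X)).2
        have hB : B < Z := by
          refine lt_of_le_of_ne (fun x hx => hx.1) ?_
          intro h
          exact hn₂ fun x hx => (h ▸ hx : x ∈ (B : Set X)).2
        have hAΦ : (A : Set X) ∈ Φ := IH A hA (Set.Subset.trans Set.inter_subset_left hZY)
        have hBΦ : (B : Set X) ∈ Φ := IH B hB (Set.Subset.trans Set.inter_subset_left hZY)
        refine hfin {(A : Set X), (B : Set X)} ?_ Z Z.2 ?_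
        · intro t ht
          simp only [Finset.coe_insert, Finset.coe_singleton, Set.mem_insert_iff,
            Set.mem_singleton_iff] at ht
          rcases ht with rfl | rfl
          · exact hAΦ
          · exact hBΦ
        · intro x hx
          simp only [Finset.mem_insert, Finset.mem_singleton, Set.mem_iUnion]
          rcases hsub hx with h | h
          · exact ⟨_, Or.inl rfl, hx, h⟩
          · exact ⟨_, Or.inr rfl, hx, h⟩
  have hspec : SpecStable Y := by
    intro y hy
    obtain ⟨W, hWΦ, hyW⟩ := Set.mem_iUnion₂.mp hy
    exact Set.Subset.trans
      (closure_minimal (Set.singleton_subset_iff.mpr hyW) (hcl W hWΦ))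
      (Set.subset_iUnion₂ (s := fun Z _ => Z) W hWΦ)
  refine ⟨Y, ⟨hspec, ?_⟩, ?_⟩
  · ext Z
    constructor
    · intro hZ
      exact ⟨hcl Z hZ, Set.subset_iUnion₂ (s := fun Z _ => Z) Z hZ⟩
    · rintro ⟨hZc, hZY⟩
      exact key ⟨Z, hZc⟩ hZY
  · rintro Y' ⟨hY's, hY'⟩
    apply Set.eq_of_subset_of_subset
    · intro y hy
      have : closure {y} ∈ Φ := by
        rw [hY']
        exact ⟨isClosed_closure, hY's y hy⟩
      exact Set.mem_iUnion₂.mpr ⟨closure {y}, this, subset_closure rfl⟩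
    · intro y hy
      obtain ⟨W, hWΦ, hyW⟩ := Set.mem_iUnion₂.mp hy
      rw [hY'] at hWΦ
      exact hWΦ.2 hyW
end

section
/- Let X be a topological space that is a union of quasi-compact open subsets. Then the following are equivalent: (1) every system of supports in X is finitary; (2) every quasi-compact open subset of X is noetherian; (3) every open subset of X is retrocompact in X; (4) X is locally noetherian (every point has a noetherian neighborhood). -/
theorem stmt3 {X : Type*} [TopologicalSpace X]
    (hX : ∀ x : X, ∃ U : Set X, IsOpen U ∧ IsCompact U ∧ x ∈ U) :
    List.TFAE [
      ∀ Φ : Set (Set X), IsSOS Φ → FinitarySOS Φ,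
      ∀ U : Set X, IsOpen U → IsCompact U → TopologicalSpace.NoetherianSpace U,
      ∀ U : Set X, IsOpen U → ∀ V : Set X, IsOpen V → IsCompact V → IsCompact (V ∩ U),
      ∀ x : X, ∃ N ∈ nhds x, TopologicalSpace.NoetherianSpace N
    ] := by
  tfae_have 1 → 3 := by
    intro h1 U hU V hV hVc
    -- Consider the SOS of closed subsets of Uᶜ
    set Φ : Set (Set X) := {C | IsClosed C ∧ C ⊆ Uᶜ} with hΦ
    have hSOS : IsSOS Φ := by
      refine ⟨⟨∅, isClosed_empty, by simp⟩, fun Z hZ => hZ.1, ?_⟩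
      intro s hs C hC hCs
      refine ⟨hC, hCs.trans ?_⟩
      intro x hx
      simp only [Set.mem_iUnion] at hx
      obtain ⟨Z, hZ, hxZ⟩ := hx
      exact (hs hZ).2 hxZ
    have hUc : Uᶜ ∈ Φ := ⟨hU.isClosed_compl, subset_rfl⟩
    obtain ⟨Z, hZΦ, hUZ, hZ⟩ := h1 Φ hSOS Uᶜ hUc
    have hZeq : Z = Uᶜ := subset_antisymm hZΦ.2 hUZ
    have := hZ V hV hVc
    rw [hZeq, Set.diff_compl] at this
    exact this
  tfae_have 3 → 1 := by
    intro h3 Φ hΦ W hW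
    refine ⟨W, hW, subset_rfl, fun U hU hUc => ?_⟩
    have hWc : IsClosed W := hΦ.2.1 W hW
    have := h3 Wᶜ hWc.isOpen_compl U hU hUc
    rwa [Set.diff_eq]
  tfae_have 3 → 2 := by
    intro h3 U hU hUc
    rw [TopologicalSpace.noetherianSpace_iff_opens]
    intro s
    obtain ⟨V, hV, hVs⟩ := s.2
    rw [Topology.IsEmbedding.subtypeVal.isCompact_iff]
    have : (Subtype.val '' (s : Set U) : Set X) = U ∩ V := by
      ext x
      simp only [Set.mem_image, Set.mem_inter_iff]
      constructor
      · rintro ⟨⟨y, hy⟩, hys, rfl⟩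
        refine ⟨hy, ?_⟩
        have : (⟨y, hy⟩ : U) ∈ Subtype.val ⁻¹' V := by rw [hVs]; exact hys
        exact this
      · rintro ⟨hxU, hxV⟩
        refine ⟨⟨x, hxU⟩, ?_, rfl⟩
        show (⟨x, hxU⟩ : U) ∈ s.carrier
        rw [← hVs]
        exact hxV
    rw [this]
    exact h3 V hV U hU hUc
  tfae_have 2 → 4 := by
    intro h2 x
    obtain ⟨U, hU, hUc, hxU⟩ := hX x
    exact ⟨U, hU.mem_nhds hxU, h2 U hU hUc⟩
  tfae_have 4 → 3 := by
    intro h4 U hU V hV hVc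
    -- cover V by finitely many noetherian neighborhoods
    choose N hN hNnoeth using h4
    choose O hON hO hxO using fun x => mem_nhds_iff.mp (hN x)
    obtain ⟨t, ht⟩ := hVc.elim_finite_subcover O hO (fun x hx => Set.mem_iUnion.mpr ⟨x, hxO x⟩)
    -- V ∩ U ⊆ ⋃ x ∈ t, (O x ∩ V ∩ U), each compact
    have hsub : V ∩ U ⊆ ⋃ x ∈ t, (O x ∩ (V ∩ U)) := by
      intro y hy
      obtain ⟨x, hx, hyO⟩ := Set.mem_iUnion₂.mp (ht hy.1)
      exact Set.mem_iUnion₂.mpr ⟨x, hx, hyO, hy⟩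
    have hcomp : ∀ x ∈ t, IsCompact (O x ∩ (V ∩ U)) := by
      intro x _
      have hsubN : O x ∩ (V ∩ U) ⊆ N x := fun y hy => hON x hy.1
      have := hNnoeth x
      have : IsCompact (((↑) : N x → X) '' (((↑) : N x → X) ⁻¹' (O x ∩ (V ∩ U)))) :=
        (TopologicalSpace.NoetherianSpace.isCompact _).image continuous_subtype_val
      rwa [Subtype.image_preimage_coe, Set.inter_eq_right.mpr hsubN] at this
    have heq : V ∩ U = ⋃ x ∈ t, (O x ∩ (V ∩ U)) := by
      refine subset_antisymm hsub ?_
      intro y hy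
      obtain ⟨x, _, _, hy2⟩ := Set.mem_iUnion₂.mp hy
      exact hy2
    rw [heq]
    exact t.isCompact_biUnion hcomp
  tfae_finish
end

section
/- Let (A, α) be an idempotent pair in a symmetric monoidal category D. Then the symmetry automorphism s_{A,A} : A ⊗ A → A ⊗ A is the identity map. -/
open CategoryTheory MonoidalCategory

/-- `(A, α)` is an idempotent pair: `r_A ∘ (1_A ⊗ α)` and `l_A ∘ (α ⊗ 1_A)` are equal
isomorphisms from `A ⊗ A` to `A`. -/
def IsIdempotentPair {D : Type*} [CategoryTheory.Category D]
    [CategoryTheory.MonoidalCategory D] {A : D}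
    (α : A ⟶ 𝟙_ D) : Prop :=
  CategoryTheory.MonoidalCategory.whiskerLeft A α ≫ (ρ_ A).hom =
      CategoryTheory.MonoidalCategory.whiskerRight α A ≫ (λ_ A).hom ∧
    CategoryTheory.IsIso (CategoryTheory.MonoidalCategory.whiskerRight α A ≫ (λ_ A).hom)

theorem stmt8 {D : Type*} [Category D] [MonoidalCategory D] [SymmetricCategory D]
    {A : D} (α : A ⟶ 𝟙_ D) (h : IsIdempotentPair α) :
    (β_ A A).hom = 𝟙 (A ⊗ A) := by
  obtain ⟨h1, h2⟩ := h
  rw [← cancel_mono (α ▷ A ≫ (λ_ A).hom)]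
  rw [← Category.assoc, ← BraidedCategory.braiding_naturality_right, Category.assoc,
    braiding_leftUnitor, h1, Category.id_comp]
end

section
/- Let D be a symmetric monoidal category with unit O and let α : A → O be a morphism. Then (A, α) is an idempotent pair if and only if for all objects F, G of D the composite map Hom(A ⊗ F, A ⊗ G) → Hom(A ⊗ F, O ⊗ G) → Hom(A ⊗ F, G), given by postcomposition with α ⊗ 1_G followed by the left unitor l_G, is a bijection. -/
open CategoryTheory MonoidalCategory

section Aux

open BraidedCategory

variable {D : Type*} [Category D] [MonoidalCategory D] {A : D} (α : A ⟶ 𝟙_ D)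

private lemma keyA' (X : D) : (α_ A A X).hom ≫ α ▷ (A ⊗ X) ≫ (λ_ (A ⊗ X)).hom
    = (α ▷ A ≫ (λ_ A).hom) ▷ X := by
  rw [← associator_naturality_left_assoc]
  simp [comp_whiskerRight]

private lemma keyB' (X : D) : (α_ A A X).hom ≫ A ◁ (α ▷ X ≫ (λ_ X).hom)
    = (A ◁ α ≫ (ρ_ A).hom) ▷ X := by
  simp only [MonoidalCategory.whiskerLeft_comp, ← associator_naturality_middle_assoc]
  simp [comp_whiskerRight]

private lemma keyC' [SymmetricCategory D] (X : D) :
    (β_ (A ⊗ X) A).inv ≫ (A ⊗ X) ◁ α ≫ (ρ_ (A ⊗ X)).hom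
      = (α_ A A X).inv ≫ (α ▷ A ≫ (λ_ A).hom) ▷ X := by
  rw [← SymmetricCategory.braiding_swap_eq_inv_braiding, ← braiding_naturality_left_assoc,
    braiding_rightUnitor, ← keyA' α X, Iso.inv_hom_id_assoc]

/-- the key computation: `f` is determined by `f ≫ α ▷ G ≫ (λ_ G).hom`. -/
private lemma star [SymmetricCategory D]
    (hEq : A ◁ α ≫ (ρ_ A).hom = α ▷ A ≫ (λ_ A).hom) {F G : D} (f : A ⊗ F ⟶ A ⊗ G) :
    ((α ▷ A ≫ (λ_ A).hom) ▷ F) ≫ f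
      = (α_ A A F).hom ≫ A ◁ (f ≫ α ▷ G ≫ (λ_ G).hom) := by
  have h1 : (α_ A A F).inv ≫ ((α ▷ A ≫ (λ_ A).hom) ▷ F) ≫ f
      = (β_ (A ⊗ F) A).inv ≫ (A ⊗ F) ◁ α ≫ (ρ_ (A ⊗ F)).hom ≫ f :=
    ((reassoc_of% keyC' α F) f).symm
  have h2 : (ρ_ (A ⊗ F)).hom ≫ f = f ▷ 𝟙_ D ≫ (ρ_ (A ⊗ G)).hom :=
    (rightUnitor_naturality f).symm
  have h3 : (A ⊗ F) ◁ α ≫ f ▷ 𝟙_ D = f ▷ A ≫ (A ⊗ G) ◁ α := whisker_exchange f α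
  have h4 : (β_ (A ⊗ F) A).inv ≫ f ▷ A = A ◁ f ≫ (β_ (A ⊗ G) A).inv := by
    rw [Iso.inv_comp_eq, ← Category.assoc, Iso.eq_comp_inv, braiding_naturality_left]
  calc ((α ▷ A ≫ (λ_ A).hom) ▷ F) ≫ f
      = (α_ A A F).hom ≫ (α_ A A F).inv ≫ ((α ▷ A ≫ (λ_ A).hom) ▷ F) ≫ f := by simp
    _ = (α_ A A F).hom ≫ (β_ (A ⊗ F) A).inv ≫ (A ⊗ F) ◁ α ≫ (ρ_ (A ⊗ F)).hom ≫ f := by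
        rw [h1]
    _ = (α_ A A F).hom ≫ (β_ (A ⊗ F) A).inv ≫ f ▷ A ≫ (A ⊗ G) ◁ α ≫ (ρ_ (A ⊗ G)).hom := by
        rw [h2, ← Category.assoc ((A ⊗ F) ◁ α), h3]; simp
    _ = (α_ A A F).hom ≫ A ◁ f ≫ (β_ (A ⊗ G) A).inv ≫ (A ⊗ G) ◁ α ≫ (ρ_ (A ⊗ G)).hom := by
        rw [← Category.assoc (β_ (A ⊗ F) A).inv, h4]; simp
    _ = (α_ A A F).hom ≫ A ◁ f ≫ (α_ A A G).inv ≫ (α ▷ A ≫ (λ_ A).hom) ▷ G := by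
        rw [keyC']
    _ = (α_ A A F).hom ≫ A ◁ f ≫ A ◁ (α ▷ G ≫ (λ_ G).hom) := by
        rw [← hEq, ← keyB' α G, Iso.inv_hom_id_assoc]
    _ = (α_ A A F).hom ≫ A ◁ (f ≫ α ▷ G ≫ (λ_ G).hom) := by
        simp [MonoidalCategory.whiskerLeft_comp]

theorem stmt9' [SymmetricCategory D] :
    (A ◁ α ≫ (ρ_ A).hom = α ▷ A ≫ (λ_ A).hom ∧ IsIso (α ▷ A ≫ (λ_ A).hom)) ↔
      ∀ F G : D,
        Function.Bijective
          (fun f : A ⊗ F ⟶ A ⊗ G => f ≫ (α ▷ G) ≫ (λ_ G).hom) := by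
  constructor
  · rintro ⟨hEq, hIso⟩ F G
    constructor
    · intro f f' h
      simp only at h
      have key : ((α ▷ A ≫ (λ_ A).hom) ▷ F) ≫ f = ((α ▷ A ≫ (λ_ A).hom) ▷ F) ≫ f' := by
        rw [star α hEq f, star α hEq f', h]
      exact (cancel_epi ((α ▷ A ≫ (λ_ A).hom) ▷ F)).1 key
    · intro g
      refine ⟨(inv (α ▷ A ≫ (λ_ A).hom) ▷ F) ≫ (α_ A A F).hom ≫ A ◁ g, ?_⟩
      have kA := (reassoc_of% keyA' α F) g
      simp only [Category.assoc]
      rw [whisker_exchange_assoc α g, MonoidalCategory.leftUnitor_naturality, kA,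
        ← comp_whiskerRight_assoc, IsIso.inv_hom_id, id_whiskerRight, Category.id_comp]
  · intro hBij
    have hIso : IsIso (α ▷ A ≫ (λ_ A).hom) := by
      obtain ⟨δ', hδ'⟩ := (hBij (𝟙_ D) A).2 (ρ_ A).hom
      simp only at hδ'
      have hδφ : ((ρ_ A).inv ≫ δ') ≫ (α ▷ A ≫ (λ_ A).hom) = 𝟙 A := by
        simp only [Category.assoc]
        rw [hδ', Iso.inv_hom_id]
      have hφδ : (α ▷ A ≫ (λ_ A).hom) ≫ ((ρ_ A).inv ≫ δ') = 𝟙 (A ⊗ A) := by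
        apply (hBij A A).1
        simp only
        rw [Category.assoc, hδφ, Category.comp_id, Category.id_comp]
      exact ⟨(ρ_ A).inv ≫ δ', hφδ, hδφ⟩
    refine ⟨?_, hIso⟩
    have key := (hBij A (𝟙_ D)).1 (a₁ := A ◁ α)
      (a₂ := (α ▷ A ≫ (λ_ A).hom) ≫ (ρ_ A).inv) ?_
    · rw [key]; simp
    · simp only
      rw [whisker_exchange_assoc α α, MonoidalCategory.leftUnitor_naturality, unitors_equal]
      simp only [Category.assoc]
      rw [MonoidalCategory.rightUnitor_naturality, Iso.inv_hom_id_assoc]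

end Aux

theorem stmt9 {D : Type*} [Category D] [MonoidalCategory D] [SymmetricCategory D]
    {A : D} (α : A ⟶ 𝟙_ D) :
    IsIdempotentPair α ↔
      ∀ F G : D,
        Function.Bijective
          (fun f : A ⊗ F ⟶ A ⊗ G => f ≫ (α ▷ G) ≫ (λ_ G).hom) := by
  exact stmt9' α
end

section
/- Let D be a symmetric monoidal category with unit O and let α : A → O be a morphism. Define j_{F,G} : Hom(A ⊗ F, A ⊗ G) → Hom(A ⊗ F, G) as composition with l_G ∘ (α ⊗ 1_G). If j_{A,A} and j_{A,O} are injective and j_{O,A} is surjective, then (A, α) is an idempotent pair. -/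
open CategoryTheory MonoidalCategory

theorem stmt10 {D : Type*} [Category D] [MonoidalCategory D] [SymmetricCategory D]
    {A : D} (α : A ⟶ 𝟙_ D)
    (hAA : Function.Injective
      (fun f : A ⊗ A ⟶ A ⊗ A => f ≫ (α ▷ A) ≫ (λ_ A).hom))
    (hAO : Function.Injective
      (fun f : A ⊗ A ⟶ A ⊗ 𝟙_ D => f ≫ (α ▷ (𝟙_ D)) ≫ (λ_ (𝟙_ D)).hom))
    (hOA : Function.Surjective
      (fun f : A ⊗ 𝟙_ D ⟶ A ⊗ A => f ≫ (α ▷ A) ≫ (λ_ A).hom)) :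
    IsIdempotentPair α := by
  obtain ⟨e, he⟩ := hOA (ρ_ A).hom
  simp only at he
  -- the candidate inverse of `φ := α ▷ A ≫ (λ_ A).hom`
  set u : A ⟶ A ⊗ A := (ρ_ A).inv ≫ e with hu_def
  have hu : u ≫ (α ▷ A) ≫ (λ_ A).hom = 𝟙 A := by
    rw [hu_def, Category.assoc, he, Iso.inv_hom_id]
  -- `φ ≫ u = 𝟙` by injectivity of `j_{A,A}`
  have hinv : ((α ▷ A) ≫ (λ_ A).hom) ≫ u = 𝟙 (A ⊗ A) := by
    apply hAA
    simp only [Category.assoc, hu, Category.comp_id, Category.id_comp]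
  have hiso : IsIso ((α ▷ A) ≫ (λ_ A).hom) := ⟨u, hinv, hu⟩
  -- `β_{A,A} ≫ (A ◁ α ≫ ρ) = α ▷ A ≫ λ`
  have hbr : (β_ A A).hom ≫ (A ◁ α) ≫ (ρ_ A).hom = (α ▷ A) ≫ (λ_ A).hom := by
    rw [← Category.assoc, ← BraidedCategory.braiding_naturality_left α A,
      Category.assoc, braiding_rightUnitor]
  -- `A ◁ α = β_{A,A} ≫ A ◁ α` by injectivity of `j_{A,O}`
  have key : (A ◁ α) = (β_ A A).hom ≫ (A ◁ α) := by
    apply hAO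
    simp only
    have h1 : (α ▷ (𝟙_ D)) ≫ (λ_ (𝟙_ D)).hom = (ρ_ A).hom ≫ α := by
      rw [unitors_equal, MonoidalCategory.rightUnitor_naturality]
    rw [h1]
    calc A ◁ α ≫ (ρ_ A).hom ≫ α
        = A ◁ α ≫ α ▷ 𝟙_ D ≫ (ρ_ (𝟙_ D)).hom := by
          rw [MonoidalCategory.rightUnitor_naturality]
      _ = α ▷ A ≫ 𝟙_ D ◁ α ≫ (ρ_ (𝟙_ D)).hom := by
          rw [whisker_exchange_assoc]
      _ = α ▷ A ≫ (λ_ A).hom ≫ α := by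
          rw [← unitors_equal, MonoidalCategory.leftUnitor_naturality]
      _ = ((β_ A A).hom ≫ A ◁ α) ≫ (ρ_ A).hom ≫ α := by
          rw [← reassoc_of% hbr]; simp only [Category.assoc]
  constructor
  · conv_lhs => rw [key]
    rw [Category.assoc, hbr]
  · exact hiso
end

section
/- Let (A, α) and (B, β) be idempotent pairs in a symmetric monoidal category D. Then there is at most one morphism λ : B → A with α ∘ λ = β; and such a λ exists if and only if the composite l_B ∘ (α ⊗ 1_B) : A ⊗ B → B is an isomorphism. -/
open CategoryTheory MonoidalCategory

section Aux

variable {D : Type*} [CategoryTheory.Category D] [CategoryTheory.MonoidalCategory D]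

/-- Naturality of the family `X ↦ α ▷ X ≫ λ_X`. -/
lemma stmt11_aux_nat {A X Y : D} (α : A ⟶ 𝟙_ D) (h : X ⟶ Y) :
    A ◁ h ≫ α ▷ Y ≫ (λ_ Y).hom = (α ▷ X ≫ (λ_ X).hom) ≫ h := by
  rw [whisker_exchange_assoc, leftUnitor_naturality, Category.assoc]

/-- Any `lam` is recovered from the right-unitor style formula. -/
lemma stmt11_aux_eq1 {A B : D} (β : B ⟶ 𝟙_ D)
    (hB1 : B ◁ β ≫ (ρ_ B).hom = β ▷ B ≫ (λ_ B).hom)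
    [IsIso (β ▷ B ≫ (λ_ B).hom)] (lam : B ⟶ A) :
    lam = inv (β ▷ B ≫ (λ_ B).hom) ≫ lam ▷ B ≫ A ◁ β ≫ (ρ_ A).hom := by
  rw [← whisker_exchange_assoc, rightUnitor_naturality, reassoc_of% hB1,
    ← Category.assoc (β ▷ B) (λ_ B).hom lam, IsIso.inv_hom_id_assoc]

/-- Any `lam` is recovered from the left-unitor style formula. -/
lemma stmt11_aux_eq2 {A B : D} (β : B ⟶ 𝟙_ D)
    [IsIso (β ▷ B ≫ (λ_ B).hom)] (lam : B ⟶ A) :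
    lam = inv (β ▷ B ≫ (λ_ B).hom) ≫ B ◁ lam ≫ β ▷ A ≫ (λ_ A).hom := by
  rw [whisker_exchange_assoc, leftUnitor_naturality,
    ← Category.assoc (β ▷ B) (λ_ B).hom lam, IsIso.inv_hom_id_assoc]

end Aux

theorem stmt11 {D : Type*} [Category D] [MonoidalCategory D] [SymmetricCategory D]
    {A B : D} (α : A ⟶ 𝟙_ D) (β : B ⟶ 𝟙_ D)
    (hα : IsIdempotentPair α) (hβ : IsIdempotentPair β) :
    (∀ lam lam' : B ⟶ A, lam ≫ α = β → lam' ≫ α = β → lam = lam') ∧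
    ((∃ lam : B ⟶ A, lam ≫ α = β) ↔ IsIso ((α ▷ B) ≫ (λ_ B).hom)) := by
  obtain ⟨hA1, hA2⟩ := hα
  obtain ⟨hB1, hB2⟩ := hβ
  haveI := hA2
  haveI := hB2
  -- uniqueness
  have uniq : ∀ lam lam' : B ⟶ A, lam ≫ α = β → lam' ≫ α = β → lam = lam' := by
    intro lam lam' hlam hlam'
    have key : inv (β ▷ B ≫ (λ_ B).hom) ≫ lam ▷ B ≫ A ◁ lam' ≫ A ◁ α ≫ (ρ_ A).hom
        = lam := by
      rw [← MonoidalCategory.whiskerLeft_comp_assoc, hlam']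
      exact (stmt11_aux_eq1 β hB1 lam).symm
    rw [← key, hA1, ← whisker_exchange_assoc, ← comp_whiskerRight_assoc, hlam]
    exact (stmt11_aux_eq2 β lam').symm
  refine ⟨uniq, ?_, ?_⟩
  · -- existence implies iso
    rintro ⟨lam, hlam⟩
    -- A ⊗ B is local
    have hΦ : IsIso (α ▷ (A ⊗ B) ≫ (λ_ (A ⊗ B)).hom) := by
      rw [leftUnitor_tensor_hom, associator_inv_naturality_left_assoc, ← comp_whiskerRight]
      infer_instance
    haveI := hΦ
    have huf : (inv (β ▷ B ≫ (λ_ B).hom) ≫ lam ▷ B) ≫ (α ▷ B ≫ (λ_ B).hom) = 𝟙 B := by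
      rw [Category.assoc, ← comp_whiskerRight_assoc, hlam]
      exact IsIso.inv_hom_id _
    refine ⟨(inv (β ▷ B ≫ (λ_ B).hom) ≫ lam ▷ B) ≫
      inv (α ▷ (A ⊗ B) ≫ (λ_ (A ⊗ B)).hom) ≫ A ◁ (α ▷ B ≫ (λ_ B).hom), ?_, ?_⟩
    · -- f ≫ v = 𝟙
      rw [← Category.assoc, ← stmt11_aux_nat α (inv (β ▷ B ≫ (λ_ B).hom) ≫ lam ▷ B),
        Category.assoc (A ◁ (inv (β ▷ B ≫ (λ_ B).hom) ≫ lam ▷ B))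
          (α ▷ (A ⊗ B) ≫ (λ_ (A ⊗ B)).hom),
        IsIso.hom_inv_id_assoc, ← MonoidalCategory.whiskerLeft_comp, huf,
        MonoidalCategory.whiskerLeft_id]
    · -- v ≫ f = 𝟙
      simp only [Category.assoc]
      rw [stmt11_aux_nat α (α ▷ B ≫ (λ_ B).hom), IsIso.inv_hom_id_assoc,
        ← comp_whiskerRight_assoc, hlam]
      exact IsIso.inv_hom_id _
  · -- iso implies existence
    intro hf
    haveI := hf
    refine ⟨inv ((α ▷ B) ≫ (λ_ B).hom) ≫ A ◁ β ≫ (ρ_ A).hom, ?_⟩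
    have key : A ◁ β ≫ (ρ_ A).hom ≫ α = ((α ▷ B) ≫ (λ_ B).hom) ≫ β := by
      rw [← rightUnitor_naturality, whisker_exchange_assoc, ← unitors_equal,
        leftUnitor_naturality, Category.assoc]
    simp only [Category.assoc]
    rw [key, IsIso.inv_hom_id_assoc]
end

section
/- Let (C, γ) be an idempotent pair in a symmetric monoidal category D, and let (B, β) be an object of the slice category D/O (β : B → O). Suppose morphisms q : B → C and p : C → B satisfy β ∘ p = γ and p ∘ q = 1_B. Then p is an isomorphism (with inverse q). -/
open CategoryTheory MonoidalCategory

lemma endo_eq_id_aux {D : Type*} [Category D] [MonoidalCategory D] {C : D}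
    (γ : C ⟶ 𝟙_ D) (hC : IsIdempotentPair γ) (f : C ⟶ C) (hf : f ≫ γ = γ) :
    f = 𝟙 C := by
  obtain ⟨hEq, hIso⟩ := hC
  have key : (γ ▷ C ≫ (λ_ C).hom) ≫ f = (γ ▷ C ≫ (λ_ C).hom) ≫ 𝟙 C := by
    rw [Category.comp_id, ← hEq, Category.assoc, ← MonoidalCategory.rightUnitor_naturality,
      ← Category.assoc, MonoidalCategory.whisker_exchange, Category.assoc, hEq,
      ← Category.assoc, ← MonoidalCategory.comp_whiskerRight, hf]
  exact (cancel_epi (γ ▷ C ≫ (λ_ C).hom)).mp key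

theorem stmt12 {D : Type*} [Category D] [MonoidalCategory D] [SymmetricCategory D]
    {B C : D} (γ : C ⟶ 𝟙_ D) (hC : IsIdempotentPair γ)
    (β : B ⟶ 𝟙_ D) (q : B ⟶ C) (p : C ⟶ B)
    (h1 : p ≫ β = γ) (h2 : q ≫ p = 𝟙 B) :
    IsIso p ∧ p ≫ q = 𝟙 C := by
  have hqγ : q ≫ γ = β := by
    rw [← h1, ← Category.assoc, h2, Category.id_comp]
  have hpq : p ≫ q = 𝟙 C := by
    apply endo_eq_id_aux γ hC
    rw [Category.assoc, hqγ, h1]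
  exact ⟨⟨q, hpq, h2⟩, hpq⟩
end

section
/- Let (A, α) and (A, β) be idempotent pairs in a symmetric monoidal category D with the same underlying object A. Then there is a unique morphism λ : A → A with β = α ∘ λ, and λ is an automorphism of A. Moreover, λ equals the composite A ≅ O ⊗ A → A ⊗ A → A ⊗ O ≅ A given by l⁻¹, then the inverse of α ⊗ 1, then 1 ⊗ β, then r. -/
open CategoryTheory MonoidalCategory

theorem stmt13 {D : Type*} [Category D] [MonoidalCategory D] [SymmetricCategory D]
    {A : D} (α β : A ⟶ 𝟙_ D)
    (hα : IsIdempotentPair α) (hβ : IsIdempotentPair β) :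
    (∃! lam : A ⟶ A, lam ≫ α = β) ∧
    ∀ lam : A ⟶ A, lam ≫ α = β →
      IsIso lam ∧ (α ▷ A) ≫ (λ_ A).hom ≫ lam = (A ◁ β) ≫ (ρ_ A).hom := by
  obtain ⟨hα1, hα2⟩ := hα
  obtain ⟨hβ1, hβ2⟩ := hβ
  haveI : IsIso (α ▷ A ≫ (λ_ A).hom) := hα2
  haveI : IsIso (β ▷ A ≫ (λ_ A).hom) := hβ2
  -- key computation
  have key : ∀ lam : A ⟶ A,
      (α ▷ A) ≫ (λ_ A).hom ≫ lam = (A ◁ (lam ≫ α)) ≫ (ρ_ A).hom := by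
    intro lam
    calc (α ▷ A) ≫ (λ_ A).hom ≫ lam
        = (α ▷ A) ≫ (𝟙_ D ◁ lam) ≫ (λ_ A).hom := by
          rw [MonoidalCategory.leftUnitor_naturality]
      _ = (A ◁ lam) ≫ (α ▷ A) ≫ (λ_ A).hom := by
          rw [← Category.assoc, ← whisker_exchange, Category.assoc]
      _ = (A ◁ lam) ≫ (A ◁ α) ≫ (ρ_ A).hom := by rw [hα1]
      _ = (A ◁ (lam ≫ α)) ≫ (ρ_ A).hom := by
          rw [← Category.assoc, ← MonoidalCategory.whiskerLeft_comp]
  set lam₀ : A ⟶ A := inv (α ▷ A ≫ (λ_ A).hom) ≫ (A ◁ β) ≫ (ρ_ A).hom with hlam₀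
  have hfl : (α ▷ A ≫ (λ_ A).hom) ≫ lam₀ = (A ◁ β) ≫ (ρ_ A).hom := by
    rw [hlam₀, IsIso.hom_inv_id_assoc]
  -- lam₀ ≫ α = β
  have hcomp : lam₀ ≫ α = β := by
    have h1 : (α ▷ A ≫ (λ_ A).hom) ≫ lam₀ ≫ α = (α ▷ A ≫ (λ_ A).hom) ≫ β := by
      have e1 : (A ◁ β) ≫ (ρ_ A).hom ≫ α = (α ▷ A) ≫ (λ_ A).hom ≫ β := by
        rw [← MonoidalCategory.rightUnitor_naturality,
          ← MonoidalCategory.leftUnitor_naturality, ← Category.assoc, whisker_exchange,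
          Category.assoc, unitors_equal]
      calc (α ▷ A ≫ (λ_ A).hom) ≫ lam₀ ≫ α
          = ((α ▷ A ≫ (λ_ A).hom) ≫ lam₀) ≫ α := by simp only [Category.assoc]
        _ = ((A ◁ β) ≫ (ρ_ A).hom) ≫ α := by rw [hfl]
        _ = (A ◁ β) ≫ (ρ_ A).hom ≫ α := by simp only [Category.assoc]
        _ = (α ▷ A) ≫ (λ_ A).hom ≫ β := e1
        _ = (α ▷ A ≫ (λ_ A).hom) ≫ β := by simp only [Category.assoc]
    exact (cancel_epi (α ▷ A ≫ (λ_ A).hom)).mp h1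
  have uniq : ∀ lam : A ⟶ A, lam ≫ α = β → lam = lam₀ := by
    intro lam h
    have hk := key lam
    rw [h] at hk
    apply (cancel_epi (α ▷ A ≫ (λ_ A).hom)).mp
    simp only [Category.assoc] at hk hfl ⊢
    rw [hk, hfl]
  refine ⟨⟨lam₀, hcomp, uniq⟩, ?_⟩
  intro lam h
  have hl : lam = lam₀ := uniq lam h
  constructor
  · rw [hl, hlam₀]
    haveI : IsIso ((A ◁ β) ≫ (ρ_ A).hom) := by rw [hβ1]; infer_instance
    infer_instance
  · rw [key lam, h]
end

section
/- Two idempotent pairs (B, β) and (A, α) in a symmetric monoidal category D are isomorphic as objects of the slice category D/O if and only if there exists an isomorphism λ : B ≅ A in D (not necessarily compatible with β and α). -/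
open CategoryTheory MonoidalCategory

theorem stmt14 {D : Type*} [Category D] [MonoidalCategory D] [SymmetricCategory D]
    {A B : D} (α : A ⟶ 𝟙_ D) (β : B ⟶ 𝟙_ D)
    (hα : IsIdempotentPair α) (hβ : IsIdempotentPair β) :
    (∃ e : B ≅ A, e.hom ≫ α = β) ↔ Nonempty (B ≅ A) := by
  constructor
  · rintro ⟨e, -⟩; exact ⟨e⟩
  · rintro ⟨f⟩
    obtain ⟨hα1, hα2⟩ := hα
    obtain ⟨hβ1, hβ2⟩ := hβ
    set γ : A ⟶ 𝟙_ D := f.inv ≫ β with hγ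
    set μα : A ⊗ A ⟶ A := A ◁ α ≫ (ρ_ A).hom with hμα
    set μβ : B ⊗ B ⟶ B := B ◁ β ≫ (ρ_ B).hom with hμβ
    set μγ : A ⊗ A ⟶ A := A ◁ γ ≫ (ρ_ A).hom with hμγ
    have iμα : IsIso μα := hα1 ▸ hα2
    have iμβ : IsIso μβ := hβ1 ▸ hβ2
    -- μγ is an isomorphism
    have step : A ◁ β ≫ (ρ_ A).hom = f.inv ▷ B ≫ B ◁ β ≫ (ρ_ B).hom ≫ f.hom := by
      rw [← whisker_exchange_assoc]
      simp [MonoidalCategory.whiskerRight_id]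
    have hμγeq : μγ = A ◁ f.inv ≫ f.inv ▷ B ≫ μβ ≫ f.hom := by
      rw [hμγ, hμβ, hγ]
      simp only [MonoidalCategory.whiskerLeft_comp, Category.assoc, step]
    have iμγ : IsIso μγ := by rw [hμγeq]; infer_instance
    -- the braiding on A ⊗ A is the identity
    have hbraid : (β_ A A).hom = 𝟙 (A ⊗ A) := by
      have h1 : (β_ A A).hom ≫ μα = μα := by
        nth_rewrite 1 [hμα]
        rw [← BraidedCategory.braiding_naturality_left_assoc α A, braiding_rightUnitor]
        exact hα1.symm
      rw [← cancel_mono μα, h1, Category.id_comp]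
    -- braiding on 𝟙 ⊗ 𝟙 is the identity
    have hbraid1 : (β_ (𝟙_ D) (𝟙_ D)).hom = 𝟙 _ := by
      rw [← cancel_mono (λ_ (𝟙_ D)).hom, braiding_leftUnitor, Category.id_comp,
        unitors_equal]
    -- hence α ⊗ γ = γ ⊗ α
    have hswap : α ⊗ₘ γ = γ ⊗ₘ α := by
      have := BraidedCategory.braiding_naturality α γ
      rwa [hbraid, hbraid1, Category.comp_id, Category.id_comp] at this
    -- key identity
    have hkey : μγ ≫ α = μα ≫ γ := by
      rw [hμγ, hμα]
      simp only [Category.assoc]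
      calc A ◁ γ ≫ (ρ_ A).hom ≫ α
          = (A ◁ γ ≫ α ▷ 𝟙_ D) ≫ (ρ_ (𝟙_ D)).hom := by
            simp [MonoidalCategory.whiskerRight_id]
        _ = (α ⊗ₘ γ) ≫ (ρ_ (𝟙_ D)).hom := by rw [tensorHom_def']
        _ = (γ ⊗ₘ α) ≫ (ρ_ (𝟙_ D)).hom := by rw [hswap]
        _ = (A ◁ α ≫ γ ▷ 𝟙_ D) ≫ (ρ_ (𝟙_ D)).hom := by rw [tensorHom_def']
        _ = A ◁ α ≫ (ρ_ A).hom ≫ γ := by simp [MonoidalCategory.whiskerRight_id]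
    refine ⟨f ≪≫ asIso (inv μα ≫ μγ), ?_⟩
    have : inv μα ≫ μγ ≫ α = γ := by
      rw [hkey, IsIso.inv_hom_id_assoc]
    simp only [Iso.trans_hom, asIso_hom, Category.assoc, this, hγ, Iso.hom_inv_id_assoc]
end

section
/- Let (A, α) and (B, β) be idempotent pairs in a symmetric monoidal category D with unit O, and let μ : O ⊗ O → O be the unitor l_O = r_O. Then the pair (A ⊗ B, μ ∘ (α ⊗ β)) is idempotent. -/
open CategoryTheory MonoidalCategory

theorem stmt15 {D : Type*} [Category D] [MonoidalCategory D] [SymmetricCategory D]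
    {A B : D} (α : A ⟶ 𝟙_ D) (β : B ⟶ 𝟙_ D)
    (hα : IsIdempotentPair α) (hβ : IsIdempotentPair β) :
    IsIdempotentPair ((α ⊗ₘ β) ≫ (λ_ (𝟙_ D)).hom) := by
  obtain ⟨hα1, hα2⟩ := hα
  obtain ⟨hβ1, hβ2⟩ := hβ
  have key1 : (A ⊗ B) ◁ ((α ⊗ₘ β) ≫ (λ_ (𝟙_ D)).hom) ≫ (ρ_ (A ⊗ B)).hom =
      tensorμ A B A B ≫ ((A ◁ α ≫ (ρ_ A).hom) ⊗ₘ (B ◁ β ≫ (ρ_ B).hom)) := by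
    rw [MonoidalCategory.whiskerLeft_comp, Category.assoc,
      tensor_right_unitality A B, MonoidalCategory.whiskerLeft_hom_inv_assoc,
      tensorμ_natural_right_assoc, tensorHom_comp_tensorHom]
  have key2 : ((α ⊗ₘ β) ≫ (λ_ (𝟙_ D)).hom) ▷ (A ⊗ B) ≫ (λ_ (A ⊗ B)).hom =
      tensorμ A B A B ≫ ((α ▷ A ≫ (λ_ A).hom) ⊗ₘ (β ▷ B ≫ (λ_ B).hom)) := by
    rw [MonoidalCategory.comp_whiskerRight, Category.assoc,
      tensor_left_unitality A B, MonoidalCategory.hom_inv_whiskerRight_assoc,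
      tensorμ_natural_left_assoc, tensorHom_comp_tensorHom]
  constructor
  · rw [key1, key2, hα1, hβ1]
  · rw [key2, ← hα1, ← hβ1]
    have : IsIso (A ◁ α ≫ (ρ_ A).hom) := hα1 ▸ hα2
    have : IsIso (B ◁ β ≫ (ρ_ B).hom) := hβ1 ▸ hβ2
    have : IsIso (tensorμ A B A B) :=
      ⟨tensorδ A B A B, tensorμ_tensorδ A B A B, tensorδ_tensorμ A B A B⟩
    infer_instance
end

section
/- Let D be a symmetric monoidal category with unit O, and let α : A → O be a morphism such that α ⊗ 1_A : A ⊗ A → O ⊗ A is an isomorphism. Then an object E of D lies in the essential image of the functor A ⊗ (−) if and only if the map ι_α(E) := l_E ∘ (α ⊗ 1_E) : A ⊗ E → E is an isomorphism. -/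
open CategoryTheory MonoidalCategory

theorem stmt16 {D : Type*} [Category D] [MonoidalCategory D] [SymmetricCategory D]
    {A : D} (α : A ⟶ 𝟙_ D) (h : IsIso (α ▷ A)) (E : D) :
    (tensorLeft A).essImage E ↔ IsIso ((α ▷ E) ≫ (λ_ E).hom) := by
  constructor
  · rintro ⟨F, ⟨e'⟩⟩
    have e : A ⊗ F ≅ E := e'
    have key : (α ▷ E) ≫ (λ_ E).hom =
        (A ◁ e.inv) ≫ ((α ▷ (A ⊗ F)) ≫ (λ_ (A ⊗ F)).hom) ≫ e.hom := by
      rw [← Category.assoc, ← Category.assoc, whisker_exchange]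
      simp
    rw [key]
    have h2 : (α ▷ (A ⊗ F)) ≫ (λ_ (A ⊗ F)).hom =
        (α_ A A F).inv ≫ ((α ▷ A) ▷ F) ≫ ((λ_ A).hom ▷ F) := by
      rw [leftUnitor_tensor_hom, ← Category.assoc, associator_inv_naturality_left]
      simp
    rw [h2]
    infer_instance
  · intro h'
    exact ⟨E, ⟨asIso ((α ▷ E) ≫ (λ_ E).hom)⟩⟩
end

section
/- Let S be a commutative noetherian ring with a decent linear topology U (a nonempty filter basis of ideals whose squares are open, making S a topological ring). For an S-module M let Γ'_U(M) = { x ∈ M : Jx = 0 for some open ideal J }. Then Γ'_U commutes with small filtered colimits of S-modules: the natural map colim (Γ'_U ∘ M_•) → Γ'_U(colim M_•) is an isomorphism for every functor M_• from a small filtered category to S-modules. Moreover, if I is an injective S-module then Γ'_U(I) is injective. -/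
open CategoryTheory Limits

/-- A decent (linear) topology on a commutative ring `S`, given by its set of open ideals:
a nonempty collection, upward closed and stable under finite intersections (so the open
ideals form a filter basis of neighborhoods of `0`), in which every open ideal contains an
open ideal whose square is open. -/
structure DecentTopology (S : Type*) [CommRing S] where
  opens : Set (Ideal S)
  nonempty : opens.Nonempty
  upward : ∀ {I J : Ideal S}, I ∈ opens → I ≤ J → J ∈ opens
  inter : ∀ {I J : Ideal S}, I ∈ opens → J ∈ opens → I ⊓ J ∈ opens
  sq_basis : ∀ {I : Ideal S}, I ∈ opens → ∃ J ∈ opens, J ≤ I ∧ J * J ∈ opens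

/-- `Γ'_U(M) = { x ∈ M : Jx = 0 for some open ideal J }`, as a submodule of `M`. -/
def DecentTopology.torsion {S : Type*} [CommRing S] (U : DecentTopology S)
    (M : Type*) [AddCommGroup M] [Module S M] : Submodule S M where
  carrier := {x | ∃ J ∈ U.opens, ∀ a ∈ J, a • x = (0 : M)}
  zero_mem' := by
    obtain ⟨J, hJ⟩ := U.nonempty
    exact ⟨J, hJ, fun a _ => smul_zero a⟩
  add_mem' := by
    rintro x y ⟨J, hJ, hx⟩ ⟨K, hK, hy⟩
    refine ⟨J ⊓ K, U.inter hJ hK, fun a ha => ?_⟩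
    rw [smul_add, hx a ha.1, hy a ha.2, add_zero]
  smul_mem' := by
    rintro c x ⟨J, hJ, hx⟩
    refine ⟨J, hJ, fun a ha => ?_⟩
    rw [smul_comm, hx a ha, smul_zero]

/-- The torsion functor `Γ'_U` on the category of `S`-modules. -/
def DecentTopology.torsionFunctor {S : Type u} [CommRing S] (U : DecentTopology S) :
    ModuleCat.{u} S ⥤ ModuleCat.{u} S where
  obj M := ModuleCat.of S (U.torsion M)
  map {M N} f := ModuleCat.ofHom (f.hom.restrict (by
    rintro x ⟨J, hJ, hx⟩
    exact ⟨J, hJ, fun a ha => by rw [← map_smul, hx a ha, map_zero]⟩))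
  map_id M := by
    ext x
    rfl
  map_comp f g := by
    ext x
    rfl

namespace DecentTopology

variable {S : Type u} [CommRing S] (U : DecentTopology S)

/-- Iterating `sq_basis`: inside any power of an open ideal there is an open ideal. -/
lemma exists_open_le_pow {J : Ideal S} (hJ : J ∈ U.opens) (n : ℕ) :
    ∃ K ∈ U.opens, K ≤ J ^ n := by
  induction n with
  | zero => exact ⟨J, hJ, by simp⟩
  | succ n ih =>
    rcases Nat.eq_zero_or_pos n with rfl | hn
    · exact ⟨J, hJ, by simpa using le_refl J⟩
    · obtain ⟨K, hK, hKle⟩ := ih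
      obtain ⟨L, hL, hLK, hLL⟩ := U.sq_basis hK
      refine ⟨L * L, hLL, ?_⟩
      calc L * L ≤ K * K := Ideal.mul_mono hLK hLK
        _ ≤ J ^ n * J ^ n := Ideal.mul_mono hKle hKle
        _ = J ^ (n + n) := (pow_add J n n).symm
        _ ≤ J ^ (n + 1) := Ideal.pow_le_pow_right (by omega)

/-- The submodule of elements killed by every element of an ideal `J`. -/
def killedBy (J : Ideal S) (M : Type u) [AddCommGroup M] [Module S M] :
    Submodule S M where
  carrier := {x | ∀ a ∈ J, a • x = 0}
  zero_mem' := fun a _ => smul_zero a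
  add_mem' := fun hx hy a ha => by
    rw [smul_add, hx a ha, hy a ha, add_zero]
  smul_mem' := fun c x hx a ha => by
    rw [smul_comm, hx a ha, smul_zero]

/-- Finitely many torsion elements are killed by a common open ideal. -/
lemma finset_kill {M : Type u} [AddCommGroup M] [Module S M] (s : Finset M)
    (hs : ∀ x ∈ s, x ∈ U.torsion M) :
    ∃ J ∈ U.opens, ∀ x ∈ s, ∀ a ∈ J, a • x = 0 := by
  classical
  induction s using Finset.induction_on with
  | empty =>
    obtain ⟨J, hJ⟩ := U.nonempty
    exact ⟨J, hJ, by simp⟩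
  | insert x s hxs ih =>
    obtain ⟨J₁, hJ₁, h₁⟩ := ih (fun y hy => hs y (Finset.mem_insert_of_mem hy))
    obtain ⟨J₂, hJ₂, h₂⟩ := hs x (Finset.mem_insert_self x s)
    refine ⟨J₂ ⊓ J₁, U.inter hJ₂ hJ₁, fun y hy a ha => ?_⟩
    rcases Finset.mem_insert.1 hy with rfl | hy
    · exact h₂ a ha.1
    · exact h₁ y hy a ha.2

/-- A linear map from an ideal (over a noetherian ring) landing in torsion elements has
image killed by a single open ideal. -/
lemma ideal_map_kill [IsNoetherianRing S] {M : Type u} [AddCommGroup M] [Module S M]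
    {b : Ideal S} (ψ : b →ₗ[S] M) (him : ∀ y, ψ y ∈ U.torsion M) :
    ∃ J ∈ U.opens, ∀ (y : b), ∀ a ∈ J, a • ψ y = 0 := by
  classical
  obtain ⟨t, ht⟩ := IsNoetherian.noetherian b
  have hmem : ∀ x ∈ t, x ∈ b := fun x hx => ht ▸ Submodule.subset_span hx
  set s : Finset M := t.attach.image (fun x => ψ ⟨x.1, hmem x.1 x.2⟩) with hsdef
  obtain ⟨J, hJ, hkill⟩ := U.finset_kill s (by
    intro z hz
    rw [hsdef, Finset.mem_image] at hz
    obtain ⟨x, _, rfl⟩ := hz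
    exact him _)
  refine ⟨J, hJ, fun y => ?_⟩
  have hb' : Submodule.span S (t : Set S) ≤
      Submodule.map b.subtype (Submodule.comap ψ (killedBy J M)) := by
    rw [Submodule.span_le]
    intro x hx
    refine ⟨⟨x, hmem x hx⟩, ?_, rfl⟩
    have : ψ ⟨x, hmem x hx⟩ ∈ s := Finset.mem_image.2 ⟨⟨x, hx⟩, Finset.mem_attach _ _, rfl⟩
    exact fun a ha => hkill _ this a ha
  have hb : b ≤ Submodule.map b.subtype (Submodule.comap ψ (killedBy J M)) := ht ▸ hb'
  obtain ⟨w, hw, hww⟩ := hb y.2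
  have : w = y := Subtype.ext hww
  subst this
  exact hw

/-- Key step: if `I` satisfies Baer's criterion, so does `Γ'_U(I)`. -/
lemma torsion_baer [IsNoetherianRing S] {I : Type u} [AddCommGroup I] [Module S I]
    (hI : Module.Baer S I) : Module.Baer S (U.torsion I) := by
  intro b φ
  classical
  set ψ : b →ₗ[S] I := (U.torsion I).subtype.comp φ with hψdef
  obtain ⟨J, hJ, hkill⟩ := U.ideal_map_kill ψ (fun y => (φ y).2)
  obtain ⟨k, hk⟩ := Ideal.exists_pow_inf_eq_pow_smul J (b : Submodule S S)
  have hAR : (J ^ (k + 1) : Ideal S) ⊓ b ≤ J • (b : Submodule S S) := by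
    have e := hk (k + 1) (Nat.le_succ k)
    have h1 : (J ^ (k + 1) : Ideal S) • (⊤ : Submodule S S) = (J ^ (k + 1) : Ideal S) := by
      rw [Ideal.smul_eq_mul, Ideal.mul_top]
    rw [h1, show k + 1 - k = 1 from by omega, pow_one] at e
    rw [e]
    exact Submodule.smul_mono le_rfl inf_le_right
  -- φ vanishes on `J • b`
  have hvanish : ∀ v ∈ J • (b : Submodule S S), ∃ hv : v ∈ b, ψ ⟨v, hv⟩ = 0 := by
    intro v hv
    refine Submodule.smul_induction_on hv ?_ ?_
    · intro r hr n hn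
      refine ⟨Submodule.smul_mem _ _ hn, ?_⟩
      have : (⟨r • n, Submodule.smul_mem _ _ hn⟩ : b) = r • ⟨n, hn⟩ := rfl
      rw [this, map_smul]
      exact hkill ⟨n, hn⟩ r hr
    · rintro x y ⟨hx, ex⟩ ⟨hy, ey⟩
      refine ⟨Submodule.add_mem _ hx hy, ?_⟩
      have : (⟨x + y, Submodule.add_mem _ hx hy⟩ : b) = ⟨x, hx⟩ + ⟨y, hy⟩ := rfl
      rw [this, map_add, ex, ey, add_zero]
  -- glue `ψ` with `0` on `J ^ (k+1)`
  set c : Ideal S := J ^ (k + 1) with hcdef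
  set f : S →ₗ.[S] I := ⟨(b : Submodule S S), ψ⟩ with hfdef
  set g : S →ₗ.[S] I := ⟨(c : Submodule S S), 0⟩ with hgdef
  have Hcompat : ∀ (x : f.domain) (y : g.domain), (x : S) = y → f x = g y := by
    rintro ⟨x, hx⟩ ⟨y, hy⟩ h
    dsimp at h
    subst h
    obtain ⟨hv, hv0⟩ := hvanish x (hAR ⟨hy, hx⟩)
    show ψ ⟨x, hx⟩ = (0 : g.domain →ₗ[S] I) ⟨x, hy⟩
    rw [show (⟨x, hx⟩ : b) = ⟨x, hv⟩ from rfl, hv0]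
    rfl
  set χ : S →ₗ.[S] I := f.sup g Hcompat with hχdef
  have hdom : χ.domain = (b : Submodule S S) ⊔ c := rfl
  obtain ⟨h, hh⟩ := hI χ.domain χ.toFun
  set y : I := h 1 with hydef
  have hyc : ∀ a ∈ c, a • y = 0 := by
    intro a ha
    have hmema : a ∈ χ.domain := hdom ▸ le_sup_right (α := Submodule S S) ha
    have h1 : a • y = h a := by
      rw [hydef, ← map_smul, smul_eq_mul, mul_one]
    rw [h1, hh a hmema]
    exact ((f.right_le_sup g Hcompat).2 (x := ⟨a, ha⟩) (y := ⟨a, hmema⟩) rfl).symm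
  obtain ⟨K, hK, hKle⟩ := U.exists_open_le_pow hJ (k + 1)
  have hy : y ∈ U.torsion I := ⟨K, hK, fun a ha => hyc a (hKle ha)⟩
  refine ⟨LinearMap.toSpanSingleton S (U.torsion I) ⟨y, hy⟩, ?_⟩
  intro x hxb
  apply Subtype.ext
  have hmemx : x ∈ χ.domain := hdom ▸ le_sup_left (α := Submodule S S) hxb
  have h1 : x • y = h x := by
    rw [hydef, ← map_smul, smul_eq_mul, mul_one]
  have h2 : h x = ψ ⟨x, hxb⟩ := by
    rw [hh x hmemx]
    exact ((f.left_le_sup g Hcompat).2 (x := ⟨x, hxb⟩) (y := ⟨x, hmemx⟩) rfl).symm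
  show x • y = ((φ ⟨x, hxb⟩ : U.torsion I) : I)
  rw [h1, h2]
  rfl

end DecentTopology

section ColimitLemmas

variable {S : Type u} [CommRing S] [IsNoetherianRing S] (U : DecentTopology S)
variable {J : Type u} [Category.{u} J] [IsFiltered J] (K : J ⥤ ModuleCat.{u} S)

/-- Finitely many scalars killing an element of a filtered colimit already kill it at a
finite stage. -/
lemma DecentTopology.exists_common_kill (j : J) (y : K.obj j) (t : Finset S)
    (ht : ∀ a ∈ t, a • colimit.ι K j y = 0) :
    ∃ (k : J) (f : j ⟶ k), ∀ a ∈ t, a • K.map f y = 0 := by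
  classical
  induction t using Finset.induction_on with
  | empty => exact ⟨j, 𝟙 j, by intro a ha; simp at ha⟩
  | insert a t hxs ih =>
    obtain ⟨k₁, f₁, h₁⟩ := ih (fun b hb => ht b (Finset.mem_insert_of_mem hb))
    have ha : colimit.ι K j (a • y) = colimit.ι K j (0 : K.obj j) := by
      rw [map_smul, map_zero]
      exact ht a (Finset.mem_insert_self a t)
    obtain ⟨k₂, f₂, g₂, hfg⟩ := Concrete.colimit_exists_of_rep_eq.{u} K _ _ ha
    rw [map_zero] at hfg
    set p₁ : j ⟶ IsFiltered.max k₁ k₂ := f₁ ≫ IsFiltered.leftToMax k₁ k₂ with hp₁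
    set p₂ : j ⟶ IsFiltered.max k₁ k₂ := f₂ ≫ IsFiltered.rightToMax k₁ k₂ with hp₂
    refine ⟨IsFiltered.coeq p₁ p₂, p₁ ≫ IsFiltered.coeqHom p₁ p₂, ?_⟩
    intro b hb
    rcases Finset.mem_insert.1 hb with rfl | hb
    · have hcomp : p₁ ≫ IsFiltered.coeqHom p₁ p₂ =
          f₂ ≫ (IsFiltered.rightToMax k₁ k₂ ≫ IsFiltered.coeqHom p₁ p₂) := by
        rw [IsFiltered.coeq_condition p₁ p₂, hp₂, Category.assoc]
      rw [hcomp, Functor.map_comp, ConcreteCategory.comp_apply, ← map_smul, ← map_smul,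
        show (K.map f₂) (b • y) = 0 from hfg, map_zero]
    · rw [hp₁, Category.assoc, Functor.map_comp, ConcreteCategory.comp_apply, ← map_smul, h₁ b hb, map_zero]

/-- The comparison map for the torsion functor on a filtered colimit is bijective. -/
lemma DecentTopology.post_bijective :
    Function.Bijective (colimit.post K U.torsionFunctor) := by
  classical
  constructor
  · rw [injective_iff_map_eq_zero]
    intro z hz
    obtain ⟨j, w, rfl⟩ := Concrete.colimit_exists_rep.{u} (K ⋙ U.torsionFunctor) z
    have h1 : (colimit.post K U.torsionFunctor) ((colimit.ι (K ⋙ U.torsionFunctor) j) w)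
        = (U.torsionFunctor.map (colimit.ι K j)) w := by
      have h := colimit.ι_post K U.torsionFunctor j
      have h2 := ConcreteCategory.congr_hom h w
      rw [ConcreteCategory.comp_apply] at h2
      exact h2
    have hz2 : (U.torsionFunctor.map (colimit.ι K j)) w = 0 := h1.symm.trans hz
    have hval : (colimit.ι K j) (w : U.torsion (K.obj j)).1 = 0 := congrArg Subtype.val hz2
    have h0 : colimit.ι K j ((w : U.torsion (K.obj j)).1) = colimit.ι K j (0 : K.obj j) := by
      rw [map_zero]
      exact hval
    obtain ⟨k, f, g, hfg⟩ := Concrete.colimit_exists_of_rep_eq.{u} K _ _ h0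
    rw [map_zero] at hfg
    have hmapw : (K ⋙ U.torsionFunctor).map f w = 0 := Subtype.ext (by
      show (K.map f) (w : U.torsion (K.obj j)).1 = 0
      exact hfg)
    have hW := ConcreteCategory.congr_hom (colimit.w (K ⋙ U.torsionFunctor) f) w
    rw [ConcreteCategory.comp_apply] at hW
    have h3 : (colimit.ι (K ⋙ U.torsionFunctor) k) ((K ⋙ U.torsionFunctor).map f w) = 0 := by
      rw [hmapw]
      exact map_zero _
    exact hW.symm.trans h3
  · intro x
    obtain ⟨xv, hxmem⟩ := x
    obtain ⟨Jx, hJx, hkillx⟩ := hxmem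
    obtain ⟨j, y, hy⟩ := Concrete.colimit_exists_rep.{u} K xv
    obtain ⟨t, ht⟩ := IsNoetherian.noetherian Jx
    have hkt : ∀ a ∈ t, a • colimit.ι K j y = 0 := by
      intro a haa
      have h' : a • colimit.ι K j y = a • xv := congrArg (fun q => a • q) hy
      exact h'.trans (hkillx a (ht ▸ Submodule.subset_span haa))
    obtain ⟨k, f, hkf⟩ := DecentTopology.exists_common_kill K j y t hkt
    have hmem' : K.map f y ∈ U.torsion (K.obj k) := by
      refine ⟨Jx, hJx, ?_⟩
      intro a haJ
      rw [← ht] at haJ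
      induction haJ using Submodule.span_induction with
      | mem b hb => exact hkf b hb
      | zero => simp
      | add u v hu hv du dv => rw [add_smul, du, dv, add_zero]
      | smul c u hu du => rw [smul_eq_mul, mul_smul, du, smul_zero]
    refine ⟨colimit.ι (K ⋙ U.torsionFunctor) k ⟨K.map f y, hmem'⟩, ?_⟩
    have h1 : (colimit.post K U.torsionFunctor)
          ((colimit.ι (K ⋙ U.torsionFunctor) k) ⟨K.map f y, hmem'⟩)
        = (U.torsionFunctor.map (colimit.ι K k)) ⟨K.map f y, hmem'⟩ := by
      have h := colimit.ι_post K U.torsionFunctor k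
      have h2 := ConcreteCategory.congr_hom h (⟨K.map f y, hmem'⟩ : U.torsion (K.obj k))
      exact h2
    rw [h1]
    apply Subtype.ext
    show (colimit.ι K k) (K.map f y) = xv
    have hW := ConcreteCategory.congr_hom (colimit.w K f) y
    rw [ConcreteCategory.comp_apply] at hW
    exact hW.trans hy

end ColimitLemmas

/-- Over a noetherian commutative ring with a decent topology, the torsion functor
`Γ'_U` commutes with small filtered colimits of `S`-modules, and preserves injectivity
of `S`-modules. -/
theorem stmt19 {S : Type u} [CommRing S] [IsNoetherianRing S] (U : DecentTopology S) :
    Nonempty (PreservesFilteredColimits U.torsionFunctor) ∧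
      ∀ I : ModuleCat.{u} S, Injective I → Injective (U.torsionFunctor.obj I) := by
  constructor
  · refine ⟨?_⟩
    constructor
    intro J' instJ instF
    constructor
    intro K
    have : IsIso (colimit.post K U.torsionFunctor) := by
      rw [ConcreteCategory.isIso_iff_bijective]
      exact DecentTopology.post_bijective U K
    exact preservesColimit_of_isIso_post U.torsionFunctor K
  · intro I hInj
    have h1 : Module.Injective S I := by
      have : CategoryTheory.Injective (ModuleCat.of S I) := hInj
      exact Module.injective_module_of_injective_object S I
    have hB : Module.Baer S I := Module.Baer.of_injective h1
    have hQ : Module.Injective S (U.torsion I) := (U.torsion_baer hB).injective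
    exact Module.injective_object_of_injective_module S (U.torsion I)
end
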